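/- Let q₁ = x²yz, q₂ = xy²z, q₃ = xyz², q₄ = xy(x²−y²), q₅ = xz(x²−z²), q₆ = yz(y²−z²) in ℂ[x,y,z], and let H(a,b,c) be the 6×6 matrix of all second-order partial derivatives of q₁,…,q₆ (columns indexed by the pairs (x,x),(y,y),(z,z),(x,y),(x,z),(y,z)) evaluated at (a,b,c). Then for every (a,b,c) ∈ ℂ³ \ {0} the matrix H(a,b,c) has rank at least 3, and at each of the three coordinate points (1,0,0), (0,1,0), (0,0,1) its rank is exactly 3. -/

import Mathlib

open MvPolynomial

/-- The six quartics x²yz, xy²z, xyz², xy(x²−y²), xz(x²−z²), yz(y²−z²). -/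
noncomputable def B3quartics : Fin 6 → MvPolynomial (Fin 3) ℂ :=
  ![X 0 ^ 2 * X 1 * X 2,
    X 0 * X 1 ^ 2 * X 2,
    X 0 * X 1 * X 2 ^ 2,
    X 0 * X 1 * (X 0 ^ 2 - X 1 ^ 2),
    X 0 * X 2 * (X 0 ^ 2 - X 2 ^ 2),
    X 1 * X 2 * (X 1 ^ 2 - X 2 ^ 2)]

/-- The six unordered pairs of variables (x,x),(y,y),(z,z),(x,y),(x,z),(y,z). -/
def varPairs : Fin 6 → Fin 3 × Fin 3 :=
  ![(0, 0), (1, 1), (2, 2), (0, 1), (0, 2), (1, 2)]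

/-- The 6×6 matrix of all second-order partial derivatives of the six B₃
quartics, evaluated at a point of ℂ³. -/
noncomputable def B3Hessian (v : Fin 3 → ℂ) : Matrix (Fin 6) (Fin 6) ℂ :=
  Matrix.of fun i j =>
    eval v (pderiv (varPairs j).1 (pderiv (varPairs j).2 (B3quartics i)))

@[simp] lemma B3aux_cons_val_five {α : Type*} {m : ℕ} (x : α) (u : Fin (m+5) → α) :
    Matrix.vecCons x u 5 =
      Matrix.vecHead (Matrix.vecTail (Matrix.vecTail (Matrix.vecTail (Matrix.vecTail u)))) := rfl

set_option maxHeartbeats 4000000 in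
lemma B3hess_eq (a b c : ℂ) : B3Hessian ![a,b,c] =
    !![2*b*c, 0, 0, 2*a*c, 2*a*b, a^2;
       0, 2*a*c, 0, 2*b*c, b^2, 2*a*b;
       0, 0, 2*a*b, c^2, 2*b*c, 2*a*c;
       6*a*b, -(6*a*b), 0, 3*a^2-3*b^2, 0, 0;
       6*a*c, 0, -(6*a*c), 0, 3*a^2-3*c^2, 0;
       0, 6*b*c, -(6*b*c), 0, 0, 3*b^2-3*c^2] := by
  ext i j
  fin_cases i <;> fin_cases j <;>
    simp [B3Hessian, B3quartics, varPairs, pow_two, pderiv_mul,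
      Matrix.cons_val_two, Matrix.cons_val_three, Matrix.cons_val_four,
      Matrix.vecHead, Matrix.vecTail] <;> ring

lemma B3submatrix_rank_le (A : Matrix (Fin 6) (Fin 6) ℂ) (f g : Fin 3 → Fin 6) :
    (A.submatrix f g).rank ≤ A.rank := by
  have hP : A.submatrix f g =
      (Matrix.of fun (i : Fin 3) (k : Fin 6) => if f i = k then (1:ℂ) else 0) * A *
      (Matrix.of fun (l : Fin 6) (j : Fin 3) => if l = g j then (1:ℂ) else 0) := by
    ext i j
    simp [Matrix.mul_apply, Finset.sum_ite_eq, Finset.sum_ite_eq', ite_and]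
  rw [hP]
  exact le_trans (Matrix.rank_mul_le_left _ _) (Matrix.rank_mul_le_right _ _)

lemma B3three_le_rank (A : Matrix (Fin 6) (Fin 6) ℂ) (f g : Fin 3 → Fin 6)
    (h : (A.submatrix f g).det ≠ 0) : 3 ≤ A.rank := by
  have h1 : (A.submatrix f g).rank = 3 := by
    simpa using Matrix.rank_of_isUnit _
      ((Matrix.isUnit_iff_isUnit_det _).mpr (isUnit_iff_ne_zero.mpr h))
  rw [← h1]
  exact B3submatrix_rank_le A f g

lemma B3rank_le_three (A : Matrix (Fin 6) (Fin 6) ℂ)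
    (h : ∀ i, A i 0 = 0 ∧ A i 1 = 0 ∧ A i 2 = 0) : A.rank ≤ 3 := by
  have hA : A = (A.submatrix id (![3,4,5] : Fin 3 → Fin 6)) *
      (Matrix.of fun (k : Fin 3) (j : Fin 6) =>
        if j = (![3,4,5] : Fin 3 → Fin 6) k then (1:ℂ) else 0) := by
    ext i j
    rw [Matrix.mul_apply, Fin.sum_univ_three]
    fin_cases j <;>
      simp [(h i).1, (h i).2.1, (h i).2.2, Matrix.submatrix_apply]
  rw [hA]
  refine le_trans (Matrix.rank_mul_le_left _ _) ?_
  simpa using Matrix.rank_le_card_width (A.submatrix id (![3,4,5] : Fin 3 → Fin 6))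

/-- At every nonzero point of ℂ³ the matrix of second-order partials of the six
B₃ quartics has rank at least 3, and at each of the three coordinate points its
rank is exactly 3. -/
theorem b3_hessian_rank_at_least_three :
    (∀ a b c : ℂ, ![a, b, c] ≠ 0 → 3 ≤ (B3Hessian ![a, b, c]).rank) ∧
    (B3Hessian ![1, 0, 0]).rank = 3 ∧
    (B3Hessian ![0, 1, 0]).rank = 3 ∧
    (B3Hessian ![0, 0, 1]).rank = 3 := by
  have lower : ∀ a b c : ℂ, ![a, b, c] ≠ 0 → 3 ≤ (B3Hessian ![a, b, c]).rank := by
    intro a b c h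
    have hne : a ≠ 0 ∨ b ≠ 0 ∨ c ≠ 0 := by
      by_contra hcon
      push_neg at hcon
      obtain ⟨ha, hb, hc⟩ := hcon
      apply h
      ext i
      fin_cases i <;> simp [ha, hb, hc]
    by_cases ha : a = 0
    · by_cases hb : b = 0
      · -- c ≠ 0
        have hc : c ≠ 0 := by rcases hne with h'|h'|h' <;> tauto
        subst ha; subst hb
        refine B3three_le_rank _ ![2,4,5] ![3,4,5] ?_
        rw [B3hess_eq]
        have : ((!![2*(0:ℂ)*c, 0, 0, 2*0*c, 2*0*0, 0^2;
           0, 2*0*c, 0, 2*0*c, 0^2, 2*0*0;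
           0, 0, 2*0*0, c^2, 2*0*c, 2*0*c;
           6*0*0, -(6*0*0), 0, 3*0^2-3*0^2, 0, 0;
           6*0*c, 0, -(6*0*c), 0, 3*0^2-3*c^2, 0;
           0, 6*0*c, -(6*0*c), 0, 0, 3*0^2-3*c^2]).submatrix ![2,4,5] ![3,4,5]).det
            = 9*c^6 := by
          rw [Matrix.det_fin_three]
          simp
          ring
        rw [this]
        exact mul_ne_zero (by norm_num) (pow_ne_zero _ hc)
      · by_cases hc : c = 0
        · -- b ≠ 0, a = c = 0
          subst ha; subst hc
          refine B3three_le_rank _ ![1,3,5] ![4,3,5] ?_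
          rw [B3hess_eq]
          have hdet : ((!![2*b*(0:ℂ), 0, 0, 2*0*0, 2*0*b, 0^2;
             0, 2*0*0, 0, 2*b*0, b^2, 2*0*b;
             0, 0, 2*0*b, 0^2, 2*b*0, 2*0*0;
             6*0*b, -(6*0*b), 0, 3*0^2-3*b^2, 0, 0;
             6*0*0, 0, -(6*0*0), 0, 3*0^2-3*0^2, 0;
             0, 6*b*0, -(6*b*0), 0, 0, 3*b^2-3*0^2]).submatrix ![1,3,5] ![4,3,5]).det
              = -9*b^6 := by
            rw [Matrix.det_fin_three]
            simp
            ring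
          rw [hdet]
          exact mul_ne_zero (by norm_num) (pow_ne_zero _ hb)
        · -- b ≠ 0, c ≠ 0, a = 0
          subst ha
          refine B3three_le_rank _ ![5,1,2] ![1,3,4] ?_
          rw [B3hess_eq]
          have hdet : ((!![2*b*c, 0, 0, 2*(0:ℂ)*c, 2*0*b, 0^2;
             0, 2*0*c, 0, 2*b*c, b^2, 2*0*b;
             0, 0, 2*0*b, c^2, 2*b*c, 2*0*c;
             6*0*b, -(6*0*b), 0, 3*0^2-3*b^2, 0, 0;
             6*0*c, 0, -(6*0*c), 0, 3*0^2-3*c^2, 0;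
             0, 6*b*c, -(6*b*c), 0, 0, 3*b^2-3*c^2]).submatrix ![5,1,2] ![1,3,4]).det
              = 18*b^3*c^3 := by
            rw [Matrix.det_fin_three]
            simp
            ring
          rw [hdet]
          exact mul_ne_zero (mul_ne_zero (by norm_num) (pow_ne_zero _ hb)) (pow_ne_zero _ hc)
    · by_cases hb : b = 0
      · by_cases hc : c = 0
        · -- a ≠ 0, b = c = 0
          subst hb; subst hc
          refine B3three_le_rank _ ![0,3,4] ![5,3,4] ?_
          rw [B3hess_eq]
          have hdet : ((!![2*(0:ℂ)*0, 0, 0, 2*a*0, 2*a*0, a^2;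
             0, 2*a*0, 0, 2*0*0, 0^2, 2*a*0;
             0, 0, 2*a*0, 0^2, 2*0*0, 2*a*0;
             6*a*0, -(6*a*0), 0, 3*a^2-3*0^2, 0, 0;
             6*a*0, 0, -(6*a*0), 0, 3*a^2-3*0^2, 0;
             0, 6*0*0, -(6*0*0), 0, 0, 3*0^2-3*0^2]).submatrix ![0,3,4] ![5,3,4]).det
              = 9*a^6 := by
            rw [Matrix.det_fin_three]
            simp
            ring
          rw [hdet]
          exact mul_ne_zero (by norm_num) (pow_ne_zero _ ha)
        · -- a ≠ 0, c ≠ 0, b = 0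
          subst hb
          refine B3three_le_rank _ ![4,0,2] ![0,3,5] ?_
          rw [B3hess_eq]
          have hdet : ((!![2*(0:ℂ)*c, 0, 0, 2*a*c, 2*a*0, a^2;
             0, 2*a*c, 0, 2*0*c, 0^2, 2*a*0;
             0, 0, 2*a*0, c^2, 2*0*c, 2*a*c;
             6*a*0, -(6*a*0), 0, 3*a^2-3*0^2, 0, 0;
             6*a*c, 0, -(6*a*c), 0, 3*a^2-3*c^2, 0;
             0, 6*0*c, -(6*0*c), 0, 0, 3*0^2-3*c^2]).submatrix ![4,0,2] ![0,3,5]).det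
              = 18*a^3*c^3 := by
            rw [Matrix.det_fin_three]
            simp
            ring
          rw [hdet]
          exact mul_ne_zero (mul_ne_zero (by norm_num) (pow_ne_zero _ ha)) (pow_ne_zero _ hc)
      · -- a ≠ 0, b ≠ 0
        refine B3three_le_rank _ ![3,0,1] ![0,4,5] ?_
        rw [B3hess_eq]
        have hdet : ((!![2*b*c, 0, 0, 2*a*c, 2*a*b, a^2;
           0, 2*a*c, 0, 2*b*c, b^2, 2*a*b;
           0, 0, 2*a*b, c^2, 2*b*c, 2*a*c;
           6*a*b, -(6*a*b), 0, 3*a^2-3*b^2, 0, 0;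
           6*a*c, 0, -(6*a*c), 0, 3*a^2-3*c^2, 0;
           0, 6*b*c, -(6*b*c), 0, 0, 3*b^2-3*c^2]).submatrix ![3,0,1] ![0,4,5]).det
            = 18*a^3*b^3 := by
          rw [Matrix.det_fin_three]
          simp
          ring
        rw [hdet]
        exact mul_ne_zero (mul_ne_zero (by norm_num) (pow_ne_zero _ ha)) (pow_ne_zero _ hb)
  refine ⟨lower, ?_, ?_, ?_⟩
  · refine le_antisymm ?_ (lower 1 0 0 (by intro h; simpa using congrFun h 0))
    refine B3rank_le_three _ fun i => ?_
    rw [B3hess_eq]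
    fin_cases i <;> norm_num [Matrix.cons_val_two]
  · refine le_antisymm ?_ (lower 0 1 0 (by intro h; simpa using congrFun h 1))
    refine B3rank_le_three _ fun i => ?_
    rw [B3hess_eq]
    fin_cases i <;> norm_num [Matrix.cons_val_two]
  · refine le_antisymm ?_ (lower 0 0 1 (by intro h; simpa using congrFun h 2))
    refine B3rank_le_three _ fun i => ?_
    rw [B3hess_eq]
    fin_cases i <;> norm_num [Matrix.cons_val_two]
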